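/- Let G be a split graph with clique K = {k_1,…,k_p} and independent set I = {l_1,…,l_q}. Let G' be the graph whose vertex set consists of the vertices of G, a disjoint copy {m_1,…,m_p} ∪ {n_1,…,n_q} of them, and four new vertices k, l, m, n, and whose edges are: all edges of G joining K to I (the clique edges inside K are not included); an edge m_i n_j whenever k_i l_j is an edge of G; all edges between K_1 = {k, k_1,…,k_p} and K_2 = {m, m_1,…,m_p}; and the pendant edges l–k and n–m. Then G' is a bisplit graph with partition (I_1 ∪ I_2, K_1, K_2), where I_1 = {l, l_1,…,l_q} and I_2 = {n, n_1,…,n_q}: these three sets are independent in G' and K_1 ∪ K_2 induces a complete bipartite graph. -/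

import Mathlib

/-- `D` is a dominating set of `G`: every vertex outside `D` has a neighbour in `D`. -/
def Dominates {V : Type*} (G : SimpleGraph V) (D : Set V) : Prop :=
  ∀ u, u ∉ D → ∃ v ∈ D, G.Adj u v

/-- `S` is a secure dominating set of `G`. -/
def SecureDominates {V : Type*} (G : SimpleGraph V) (S : Set V) : Prop :=
  Dominates G S ∧
    ∀ u, u ∉ S → ∃ v ∈ S, G.Adj u v ∧ Dominates G ((S \ {v}) ∪ {u})

/-- The graph `G'` obtained from a split graph `G` with clique `K` and independent set `I`.
Vertices: the original vertices (`Sum.inl u`), a disjoint copy of them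
(`Sum.inr (Sum.inl u)`), and four new vertices `k = Sum.inr (Sum.inr 0)`,
`l = Sum.inr (Sum.inr 1)`, `m = Sum.inr (Sum.inr 2)`, `n = Sum.inr (Sum.inr 3)`.
Edges: all edges of `G` joining `K` to `I` (the clique edges inside `K` are not included);
an edge between the copies of `kᵢ ∈ K` and `lⱼ ∈ I` whenever `kᵢ lⱼ` is an edge of `G`;
all edges between `{k} ∪ K` and the copy `{m} ∪ K`-copy; and the pendant edges
`l - k` and `n - m`. -/
def splitBigExt {V : Type*} (G : SimpleGraph V) (K I : Set V) :
    SimpleGraph (V ⊕ V ⊕ Fin 4) :=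
  SimpleGraph.fromRel (fun a b =>
    (∃ u v, a = Sum.inl u ∧ b = Sum.inl v ∧ G.Adj u v ∧ u ∈ K ∧ v ∈ I) ∨
    (∃ u v, a = Sum.inr (Sum.inl u) ∧ b = Sum.inr (Sum.inl v) ∧ G.Adj u v ∧ u ∈ K ∧ v ∈ I) ∨
    (∃ u v, a = Sum.inl u ∧ u ∈ K ∧ b = Sum.inr (Sum.inl v) ∧ v ∈ K) ∨
    (∃ u, a = Sum.inl u ∧ u ∈ K ∧ b = Sum.inr (Sum.inr 2)) ∨
    (∃ v, a = Sum.inr (Sum.inr 0) ∧ b = Sum.inr (Sum.inl v) ∧ v ∈ K) ∨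
    (a = Sum.inr (Sum.inr 0) ∧ b = Sum.inr (Sum.inr 2)) ∨
    (a = Sum.inr (Sum.inr 1) ∧ b = Sum.inr (Sum.inr 0)) ∨
    (a = Sum.inr (Sum.inr 3) ∧ b = Sum.inr (Sum.inr 2)))


private lemma splitBigExt_rel_bad {V : Type*} (G : SimpleGraph V) (K I : Set V)
    {a b : V ⊕ V ⊕ Fin 4}
    (h : (∃ u v, a = Sum.inl u ∧ b = Sum.inl v ∧ G.Adj u v ∧ u ∈ K ∧ v ∈ I) ∨
    (∃ u v, a = Sum.inr (Sum.inl u) ∧ b = Sum.inr (Sum.inl v) ∧ G.Adj u v ∧ u ∈ K ∧ v ∈ I) ∨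
    (∃ u v, a = Sum.inl u ∧ u ∈ K ∧ b = Sum.inr (Sum.inl v) ∧ v ∈ K) ∨
    (∃ u, a = Sum.inl u ∧ u ∈ K ∧ b = Sum.inr (Sum.inr 2)) ∨
    (∃ v, a = Sum.inr (Sum.inr 0) ∧ b = Sum.inr (Sum.inl v) ∧ v ∈ K) ∨
    (a = Sum.inr (Sum.inr 0) ∧ b = Sum.inr (Sum.inr 2)) ∨
    (a = Sum.inr (Sum.inr 1) ∧ b = Sum.inr (Sum.inr 0)) ∨
    (a = Sum.inr (Sum.inr 3) ∧ b = Sum.inr (Sum.inr 2))) :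
    (∃ u ∈ K, a = Sum.inl u ∨ a = Sum.inr (Sum.inl u)) ∨ a = Sum.inr (Sum.inr 0) ∨
    (∃ u ∈ K, b = Sum.inl u ∨ b = Sum.inr (Sum.inl u)) ∨ b = Sum.inr (Sum.inr 0) ∨
      b = Sum.inr (Sum.inr 2) := by
  rcases h with ⟨u, v, rfl, rfl, _, hu, _⟩ | ⟨u, v, rfl, rfl, _, hu, _⟩ |
      ⟨u, v, rfl, hu, rfl, _⟩ | ⟨u, rfl, hu, rfl⟩ | ⟨v, rfl, rfl, _⟩ |
      ⟨rfl, rfl⟩ | ⟨rfl, rfl⟩ | ⟨rfl, rfl⟩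
  · exact Or.inl ⟨u, hu, Or.inl rfl⟩
  · exact Or.inl ⟨u, hu, Or.inr rfl⟩
  · exact Or.inl ⟨u, hu, Or.inl rfl⟩
  · exact Or.inl ⟨u, hu, Or.inl rfl⟩
  · exact Or.inr (Or.inl rfl)
  · exact Or.inr (Or.inl rfl)
  · exact Or.inr (Or.inr (Or.inr (Or.inl rfl)))
  · exact Or.inr (Or.inr (Or.inr (Or.inr rfl)))

theorem splitBigExt_isBisplit {V : Type*} [Fintype V]
    (G : SimpleGraph V) (K I : Set V)
    (hpart : K ∪ I = Set.univ) (hdisj : Disjoint K I)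
    (hK : G.IsClique K) (hI : ∀ a ∈ I, ∀ b ∈ I, ¬ G.Adj a b) :
    -- with `K₁ = {k} ∪ K`, `K₂ = {m} ∪ K`-copy, `I₁ = {l} ∪ I`, `I₂ = {n} ∪ I`-copy:
    -- `G'` is a bisplit graph with partition `(I₁ ∪ I₂, K₁, K₂)`
    ((Sum.inl '' I ∪ {Sum.inr (Sum.inr 1)} : Set (V ⊕ V ⊕ Fin 4)) ∪
        ((Sum.inr ∘ Sum.inl) '' I ∪ {Sum.inr (Sum.inr 3)})) ∪
      (Sum.inl '' K ∪ {Sum.inr (Sum.inr 0)}) ∪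
      ((Sum.inr ∘ Sum.inl) '' K ∪ {Sum.inr (Sum.inr 2)}) = Set.univ ∧
    Disjoint ((Sum.inl '' I ∪ {Sum.inr (Sum.inr 1)} : Set (V ⊕ V ⊕ Fin 4)) ∪
        ((Sum.inr ∘ Sum.inl) '' I ∪ {Sum.inr (Sum.inr 3)}))
      (Sum.inl '' K ∪ {Sum.inr (Sum.inr 0)}) ∧
    Disjoint ((Sum.inl '' I ∪ {Sum.inr (Sum.inr 1)} : Set (V ⊕ V ⊕ Fin 4)) ∪
        ((Sum.inr ∘ Sum.inl) '' I ∪ {Sum.inr (Sum.inr 3)}))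
      ((Sum.inr ∘ Sum.inl) '' K ∪ {Sum.inr (Sum.inr 2)}) ∧
    Disjoint (Sum.inl '' K ∪ {Sum.inr (Sum.inr 0)} : Set (V ⊕ V ⊕ Fin 4))
      ((Sum.inr ∘ Sum.inl) '' K ∪ {Sum.inr (Sum.inr 2)}) ∧
    -- the three parts are independent sets in `G'`
    (∀ a ∈ ((Sum.inl '' I ∪ {Sum.inr (Sum.inr 1)} : Set (V ⊕ V ⊕ Fin 4)) ∪
        ((Sum.inr ∘ Sum.inl) '' I ∪ {Sum.inr (Sum.inr 3)})),
      ∀ b ∈ ((Sum.inl '' I ∪ {Sum.inr (Sum.inr 1)} : Set (V ⊕ V ⊕ Fin 4)) ∪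
        ((Sum.inr ∘ Sum.inl) '' I ∪ {Sum.inr (Sum.inr 3)})),
        ¬ (splitBigExt G K I).Adj a b) ∧
    (∀ a ∈ (Sum.inl '' K ∪ {Sum.inr (Sum.inr 0)} : Set (V ⊕ V ⊕ Fin 4)),
      ∀ b ∈ (Sum.inl '' K ∪ {Sum.inr (Sum.inr 0)} : Set (V ⊕ V ⊕ Fin 4)),
        ¬ (splitBigExt G K I).Adj a b) ∧
    (∀ a ∈ ((Sum.inr ∘ Sum.inl) '' K ∪ {Sum.inr (Sum.inr 2)} : Set (V ⊕ V ⊕ Fin 4)),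
      ∀ b ∈ ((Sum.inr ∘ Sum.inl) '' K ∪ {Sum.inr (Sum.inr 2)} : Set (V ⊕ V ⊕ Fin 4)),
        ¬ (splitBigExt G K I).Adj a b) ∧
    -- `K₁ ∪ K₂` induces a complete bipartite graph
    (∀ a ∈ (Sum.inl '' K ∪ {Sum.inr (Sum.inr 0)} : Set (V ⊕ V ⊕ Fin 4)),
      ∀ b ∈ ((Sum.inr ∘ Sum.inl) '' K ∪ {Sum.inr (Sum.inr 2)} : Set (V ⊕ V ⊕ Fin 4)),
        (splitBigExt G K I).Adj a b) := by
  
  have hKI : ∀ x, x ∈ K → x ∉ I := fun x hx => Set.disjoint_left.mp hdisj hx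
  refine ⟨?_, ?_, ?_, ?_, ?_, ?_, ?_, ?_⟩
  · ext x
    simp only [Set.mem_univ, iff_true]
    rcases x with u | u | i
    · have hu : u ∈ K ∪ I := hpart ▸ Set.mem_univ u
      rcases hu with h | h
      · exact Set.mem_union_left _ (Set.mem_union_right _ (Set.mem_union_left _ ⟨u, h, rfl⟩))
      · exact Set.mem_union_left _ (Set.mem_union_left _ (Set.mem_union_left _
          (Set.mem_union_left _ ⟨u, h, rfl⟩)))
    · have hu : u ∈ K ∪ I := hpart ▸ Set.mem_univ u
      rcases hu with h | h
      · exact Set.mem_union_right _ (Set.mem_union_left _ ⟨u, h, rfl⟩)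
      · exact Set.mem_union_left _ (Set.mem_union_left _ (Set.mem_union_right _
          (Set.mem_union_left _ ⟨u, h, rfl⟩)))
    · fin_cases i
      · exact Set.mem_union_left _ (Set.mem_union_right _ (Set.mem_union_right _ rfl))
      · exact Set.mem_union_left _ (Set.mem_union_left _ (Set.mem_union_left _
          (Set.mem_union_right _ rfl)))
      · exact Set.mem_union_right _ (Set.mem_union_right _ rfl)
      · exact Set.mem_union_left _ (Set.mem_union_left _ (Set.mem_union_right _
          (Set.mem_union_right _ rfl)))
  · rw [Set.disjoint_left]
    rintro a ((⟨u, hu, rfl⟩ | rfl) | (⟨u, hu, rfl⟩ | rfl)) (⟨v, hv, h⟩ | h) <;>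
      simp_all <;> exact hKI _ hv (h ▸ hu)
  · rw [Set.disjoint_left]
    rintro a ((⟨u, hu, rfl⟩ | rfl) | (⟨u, hu, rfl⟩ | rfl)) (⟨v, hv, h⟩ | h) <;>
      simp_all <;> exact hKI _ hv (h ▸ hu)
  · rw [Set.disjoint_left]
    rintro a (⟨u, hu, rfl⟩ | rfl) (⟨v, hv, h⟩ | h) <;> simp_all
  · rintro a ha b hb hadj
    have hgood : ∀ x ∈ ((Sum.inl '' I ∪ {Sum.inr (Sum.inr 1)} : Set (V ⊕ V ⊕ Fin 4)) ∪
        ((Sum.inr ∘ Sum.inl) '' I ∪ {Sum.inr (Sum.inr 3)})),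
        ¬ ((∃ u ∈ K, x = Sum.inl u ∨ x = Sum.inr (Sum.inl u)) ∨ x = Sum.inr (Sum.inr 0) ∨
          x = Sum.inr (Sum.inr 2)) := by
      rintro x ((⟨u, hu, rfl⟩ | rfl) | (⟨u, hu, rfl⟩ | rfl)) (⟨w, hw, h | h⟩ | h | h) <;>
        first
          | (cases h; exact hKI _ hw hu)
          | simp_all
    rw [splitBigExt, SimpleGraph.fromRel_adj] at hadj
    obtain ⟨-, h | h⟩ := hadj
    · rcases splitBigExt_rel_bad G K I h with h' | h' | h' | h' | h'
      · exact hgood a ha (Or.inl h')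
      · exact hgood a ha (Or.inr (Or.inl h'))
      · exact hgood b hb (Or.inl h')
      · exact hgood b hb (Or.inr (Or.inl h'))
      · exact hgood b hb (Or.inr (Or.inr h'))
    · rcases splitBigExt_rel_bad G K I h with h' | h' | h' | h' | h'
      · exact hgood b hb (Or.inl h')
      · exact hgood b hb (Or.inr (Or.inl h'))
      · exact hgood a ha (Or.inl h')
      · exact hgood a ha (Or.inr (Or.inl h'))
      · exact hgood a ha (Or.inr (Or.inr h'))
  · rintro a (⟨u, hu, rfl⟩ | rfl) b (⟨v, hv, rfl⟩ | rfl) hadj <;>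
      rw [splitBigExt, SimpleGraph.fromRel_adj] at hadj <;>
      obtain ⟨hne, h | h⟩ := hadj <;>
      rcases h with ⟨x, y, h1, h2, _, hx, hy⟩ | ⟨x, y, h1, h2, _, hx, hy⟩ |
        ⟨x, y, h1, hx, h2, hy⟩ | ⟨x, h1, hx, h2⟩ | ⟨x, h1, h2, hx⟩ |
        ⟨h1, h2⟩ | ⟨h1, h2⟩ | ⟨h1, h2⟩ <;>
      first
        | (cases h1; cases h2; first | exact hKI _ hv hy | exact hKI _ hu hy)
        | simp_all
  · rintro a (⟨u, hu, rfl⟩ | rfl) b (⟨v, hv, rfl⟩ | rfl) hadj <;>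
      simp -failIfUnchanged only [Function.comp_apply] at * <;>
      rw [splitBigExt, SimpleGraph.fromRel_adj] at hadj <;>
      obtain ⟨hne, h | h⟩ := hadj <;>
      rcases h with ⟨x, y, h1, h2, _, hx, hy⟩ | ⟨x, y, h1, h2, _, hx, hy⟩ |
        ⟨x, y, h1, hx, h2, hy⟩ | ⟨x, h1, hx, h2⟩ | ⟨x, h1, h2, hx⟩ |
        ⟨h1, h2⟩ | ⟨h1, h2⟩ | ⟨h1, h2⟩ <;>
      first
        | (cases h1; cases h2; first | exact hKI _ hv hy | exact hKI _ hu hy)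
        | simp_all
  · rintro a (⟨u, hu, rfl⟩ | rfl) b (⟨v, hv, rfl⟩ | rfl) <;>
      simp -failIfUnchanged only [Function.comp_apply] at * <;>
      rw [splitBigExt, SimpleGraph.fromRel_adj] <;>
      refine ⟨by simp, Or.inl ?_⟩
    · exact Or.inr (Or.inr (Or.inl ⟨u, v, rfl, hu, rfl, hv⟩))
    · exact Or.inr (Or.inr (Or.inr (Or.inl ⟨u, rfl, hu, rfl⟩)))
    · exact Or.inr (Or.inr (Or.inr (Or.inr (Or.inl ⟨v, rfl, rfl, hv⟩))))
    · exact Or.inr (Or.inr (Or.inr (Or.inr (Or.inr (Or.inl ⟨rfl, rfl⟩)))))
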